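/- Let n ≥ 1, λ_1,…,λ_n pairwise distinct reals, α_1,…,α_n reals, and let y_1,…,y_n, f_1,…,f_n : ℝ × I → ℝ be smooth (I an open interval, 0 ∉ I) satisfying the system (yfx), the system (yft), and the constraint (uy'). Fix k and suppose f_j − f_k is nowhere vanishing for every j ≠ k. Define (the Bäcklund transformation B_k): f̃_j := −f_k − (λ_j − λ_k)/(f_j − f_k) for j ≠ k, f̃_k := −f_k; ỹ_j := ((f_j − f_k)/(λ_j − λ_k))·((f_j − f_k) y_j − α_j) for j ≠ k, ỹ_k := −y_k + 6t(f_k² + λ_k) − x − Σ_{j≠k}(ỹ_j + y_j); α̃_j := α_j for j ≠ k, α̃_k := 1 − α_k. Then (ỹ_j, f̃_j) satisfy (yfx), (yft) and (uy') with parameters α̃_1,…,α̃_n and the same λ_1,…,λ_n. -/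

import Mathlib

open Set Function

noncomputable section

/-- Partial derivative in the first (space) variable. -/
def pdx (u : ℝ → ℝ → ℝ) : ℝ → ℝ → ℝ := fun x t => deriv (fun x' => u x' t) x

/-- Partial derivative in the second (time) variable. -/
def pdt (u : ℝ → ℝ → ℝ) : ℝ → ℝ → ℝ := fun x t => deriv (fun t' => u x t') t

/-- The constraint (uy'): `u = x/(6t) + (y₁ + ⋯ + yₙ)/(3t)`. -/
def ucon (n : ℕ) (y : Fin n → ℝ → ℝ → ℝ) : ℝ → ℝ → ℝ :=
  fun x t => x / (6*t) + (∑ j, y j x t) / (3*t)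

/-! Auxiliary abbreviations -/

def Yq (n : ℕ) (lam alp : Fin n → ℝ) (y f : Fin n → ℝ → ℝ → ℝ) (j : Fin n) (x t : ℝ) : ℝ :=
  2 * y j x t * f j x t - alp j

def Fq (n : ℕ) (lam alp : Fin n → ℝ) (y f : Fin n → ℝ → ℝ → ℝ) (j : Fin n) (x t : ℝ) : ℝ :=
  ucon n y x t - f j x t ^ 2 - lam j

def U1 (n : ℕ) (lam alp : Fin n → ℝ) (y f : Fin n → ℝ → ℝ → ℝ) (x t : ℝ) : ℝ :=
  1/(6*t) + (∑ j, Yq n lam alp y f j x t)/(3*t)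

def Wq (n : ℕ) (lam alp : Fin n → ℝ) (y f : Fin n → ℝ → ℝ → ℝ) (j : Fin n) (x t : ℝ) : ℝ :=
  2 * Yq n lam alp y f j x t * f j x t + 2 * y j x t * Fq n lam alp y f j x t

def U2 (n : ℕ) (lam alp : Fin n → ℝ) (y f : Fin n → ℝ → ℝ → ℝ) (x t : ℝ) : ℝ :=
  (∑ j, Wq n lam alp y f j x t)/(3*t)

def Tyq (n : ℕ) (lam alp : Fin n → ℝ) (y f : Fin n → ℝ → ℝ → ℝ) (j : Fin n) (x t : ℝ) : ℝ :=
  2 * U1 n lam alp y f x t * y j x t - 2 * (ucon n y x t + 2*lam j) * Yq n lam alp y f j x t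

def Tfq (n : ℕ) (lam alp : Fin n → ℝ) (y f : Fin n → ℝ → ℝ → ℝ) (j : Fin n) (x t : ℝ) : ℝ :=
  U2 n lam alp y f x t -
    (2 * U1 n lam alp y f x t * f j x t +
      2 * (ucon n y x t + 2*lam j) * Fq n lam alp y f j x t)

/-- derivative value of the `x`-section of the transformed `ny j` (for `j ≠ k`). -/
def NYx (n : ℕ) (lam alp : Fin n → ℝ) (y f : Fin n → ℝ → ℝ → ℝ) (k j : Fin n) (x t : ℝ) : ℝ :=
  (Fq n lam alp y f j x t - Fq n lam alp y f k x t) / (lam j - lam k) *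
      ((f j x t - f k x t) * y j x t - alp j) +
    (f j x t - f k x t) / (lam j - lam k) *
      ((Fq n lam alp y f j x t - Fq n lam alp y f k x t) * y j x t +
        (f j x t - f k x t) * Yq n lam alp y f j x t)

/-- derivative value of the `t`-section of the transformed `ny j` (for `j ≠ k`). -/
def NYt (n : ℕ) (lam alp : Fin n → ℝ) (y f : Fin n → ℝ → ℝ → ℝ) (k j : Fin n) (x t : ℝ) : ℝ :=
  (Tfq n lam alp y f j x t - Tfq n lam alp y f k x t) / (lam j - lam k) *
      ((f j x t - f k x t) * y j x t - alp j) +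
    (f j x t - f k x t) / (lam j - lam k) *
      ((Tfq n lam alp y f j x t - Tfq n lam alp y f k x t) * y j x t +
        (f j x t - f k x t) * Tyq n lam alp y f j x t)

lemma sect_x_diff {w : ℝ → ℝ → ℝ} {I : Set ℝ} (hIo : IsOpen I)
    (hw : ContDiffOn ℝ (⊤ : ℕ∞) (uncurry w) (univ ×ˢ I)) {t : ℝ} (ht : t ∈ I) (x : ℝ) :
    HasDerivAt (fun x' => w x' t) (pdx w x t) x := by
  have hopen : IsOpen ((univ : Set ℝ) ×ˢ I) := isOpen_univ.prod hIo
  have h1 : ContDiffAt ℝ (⊤ : ℕ∞) (uncurry w) (x, t) :=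
    hw.contDiffAt (hopen.mem_nhds (by simp [ht]))
  have h2 : DifferentiableAt ℝ (uncurry w) (x, t) := h1.differentiableAt (by norm_num)
  exact (h2.comp x (differentiableAt_id.prodMk (differentiableAt_const t))).hasDerivAt

lemma sect_t_diff {w : ℝ → ℝ → ℝ} {I : Set ℝ} (hIo : IsOpen I)
    (hw : ContDiffOn ℝ (⊤ : ℕ∞) (uncurry w) (univ ×ˢ I)) {t : ℝ} (ht : t ∈ I) (x : ℝ) :
    HasDerivAt (fun t' => w x t') (pdt w x t) t := by
  have hopen : IsOpen ((univ : Set ℝ) ×ˢ I) := isOpen_univ.prod hIo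
  have h1 : ContDiffAt ℝ (⊤ : ℕ∞) (uncurry w) (x, t) :=
    hw.contDiffAt (hopen.mem_nhds (by simp [ht]))
  have h2 : DifferentiableAt ℝ (uncurry w) (x, t) := h1.differentiableAt (by norm_num)
  exact (h2.comp t ((differentiableAt_const x).prodMk differentiableAt_id)).hasDerivAt

lemma hasDerivAt_congr_fun {g f : ℝ → ℝ} {f' x : ℝ} (h : HasDerivAt f f' x)
    (he : ∀ z, g z = f z) : HasDerivAt g f' x :=
  h.congr_of_eventuallyEq (Filter.Eventually.of_forall he)


set_option maxHeartbeats 4000000 in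
/-- the Bäcklund transformation `B_k` in the variables `(y, f)` maps solutions
of (yfx), (yft), (uy') with parameters `α` to solutions with `α̃_k = 1 − α_k`,
`α̃_j = α_j` (`j ≠ k`). -/
theorem statement15
    (n : ℕ) (hn : 1 ≤ n)
    (lam alp : Fin n → ℝ) (hlam : Function.Injective lam)
    (a b : ℝ) (I : Set ℝ) (hI : I = Set.Ioo a b) (hI0 : (0:ℝ) ∉ I)
    (y f : Fin n → ℝ → ℝ → ℝ)
    (hysmooth : ∀ j, ContDiffOn ℝ (⊤ : ℕ∞) (uncurry (y j)) (univ ×ˢ I))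
    (hfsmooth : ∀ j, ContDiffOn ℝ (⊤ : ℕ∞) (uncurry (f j)) (univ ×ˢ I))
    -- system (yfx)
    (hyfx : ∀ j x t, t ∈ I →
      pdx (y j) x t = 2 * y j x t * f j x t - alp j
      ∧ pdx (f j) x t = ucon n y x t - (f j x t)^2 - lam j)
    -- system (yft)
    (hyft : ∀ j x t, t ∈ I →
      pdt (y j) x t
        = 2 * pdx (ucon n y) x t * y j x t
          - 2 * (ucon n y x t + 2*lam j) * pdx (y j) x t
      ∧ pdt (f j) x t
        = pdx (fun x' t' => pdx (ucon n y) x' t'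
            - 2*(ucon n y x' t' + 2*lam j) * f j x' t') x t)
    (k : Fin n)
    (hfkne : ∀ j, j ≠ k → ∀ x t, t ∈ I → f j x t - f k x t ≠ 0)
    -- the Bäcklund transformation B_k
    (ny nf : Fin n → ℝ → ℝ → ℝ) (nalp : Fin n → ℝ)
    (hnf : ∀ j, j ≠ k → ∀ x t,
      nf j x t = -(f k x t) - (lam j - lam k) / (f j x t - f k x t))
    (hnfk : ∀ x t, nf k x t = -(f k x t))
    (hny : ∀ j, j ≠ k → ∀ x t,
      ny j x t = ((f j x t - f k x t) / (lam j - lam k))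
                  * ((f j x t - f k x t) * y j x t - alp j))
    (hnyk : ∀ x t,
      ny k x t = -(y k x t) + 6*t*((f k x t)^2 + lam k) - x
                  - ∑ j ∈ Finset.univ.erase k, (ny j x t + y j x t))
    (hnalp : ∀ j, j ≠ k → nalp j = alp j) (hnalpk : nalp k = 1 - alp k) :
    -- the transformed data satisfies (yfx), (yft) with (uy')
    (∀ j x t, t ∈ I →
      pdx (ny j) x t = 2 * ny j x t * nf j x t - nalp j
      ∧ pdx (nf j) x t = ucon n ny x t - (nf j x t)^2 - lam j)
    ∧ (∀ j x t, t ∈ I →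
      pdt (ny j) x t
        = 2 * pdx (ucon n ny) x t * ny j x t
          - 2 * (ucon n ny x t + 2*lam j) * pdx (ny j) x t
      ∧ pdt (nf j) x t
        = pdx (fun x' t' => pdx (ucon n ny) x' t'
            - 2*(ucon n ny x' t' + 2*lam j) * nf j x' t') x t) := by
  classical
  have hIo : IsOpen I := hI ▸ isOpen_Ioo
  have htne : ∀ {t : ℝ}, t ∈ I → t ≠ 0 := fun {t} ht h => hI0 (h ▸ ht)
  have hmu : ∀ j, j ≠ k → lam j - lam k ≠ 0 :=
    fun j hj => sub_ne_zero.mpr fun h => hj (hlam h)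
  -- x-derivatives of the basic sections
  have hYx : ∀ j x t, t ∈ I →
      HasDerivAt (fun x' => y j x' t) (Yq n lam alp y f j x t) x := by
    intro j x t ht
    have h := sect_x_diff hIo (hysmooth j) ht x
    rw [(hyfx j x t ht).1] at h
    exact h
  have hFx : ∀ j x t, t ∈ I →
      HasDerivAt (fun x' => f j x' t) (Fq n lam alp y f j x t) x := by
    intro j x t ht
    have h := sect_x_diff hIo (hfsmooth j) ht x
    rw [(hyfx j x t ht).2] at h
    exact h
  have hUx : ∀ x t, t ∈ I →
      HasDerivAt (fun x' => ucon n y x' t) (U1 n lam alp y f x t) x := by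
    intro x t ht
    have h1 : HasDerivAt (fun x' : ℝ => x' / (6*t)) (1/(6*t)) x :=
      (hasDerivAt_id x).div_const (6*t)
    exact h1.add ((HasDerivAt.fun_sum (fun j _ => hYx j x t ht)).div_const (3*t))
  have hpdxu : ∀ x t, t ∈ I → pdx (ucon n y) x t = U1 n lam alp y f x t :=
    fun x t ht => (hUx x t ht).deriv
  have hWx : ∀ j x t, t ∈ I →
      HasDerivAt (fun x' => Yq n lam alp y f j x' t) (Wq n lam alp y f j x t) x := by
    intro j x t ht
    exact (((hYx j x t ht).const_mul 2).mul (hFx j x t ht)).sub_const (alp j)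
  have hU1s : ∀ x t, t ∈ I →
      HasDerivAt (fun x' => U1 n lam alp y f x' t) (U2 n lam alp y f x t) x := by
    intro x t ht
    exact HasDerivAt.const_add (1/(6*t))
      ((HasDerivAt.fun_sum (fun j _ => hWx j x t ht)).div_const (3*t))
  have hU1x : ∀ x t, t ∈ I →
      HasDerivAt (fun x' => pdx (ucon n y) x' t) (U2 n lam alp y f x t) x := by
    intro x t ht
    exact hasDerivAt_congr_fun (hU1s x t ht) (fun z => hpdxu z t ht)
  -- t-derivatives of the basic quantities
  have hyt : ∀ j x t, t ∈ I → pdt (y j) x t = Tyq n lam alp y f j x t := by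
    intro j x t ht
    have h := (hyft j x t ht).1
    rw [hpdxu x t ht, (hyfx j x t ht).1] at h
    exact h
  have hft : ∀ j x t, t ∈ I → pdt (f j) x t = Tfq n lam alp y f j x t := by
    intro j x t ht
    have hR := (hU1x x t ht).sub
      ((((hUx x t ht).add_const (2*lam j)).const_mul 2).mul (hFx j x t ht))
    have e2 : pdx (fun x' t' => pdx (ucon n y) x' t'
        - 2*(ucon n y x' t' + 2*lam j) * f j x' t') x t = _ := hR.deriv
    rw [(hyft j x t ht).2, e2]
    rfl
  have hYt : ∀ j x t, t ∈ I →
      HasDerivAt (fun t' => y j x t') (Tyq n lam alp y f j x t) t := by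
    intro j x t ht
    have h := sect_t_diff hIo (hysmooth j) ht x
    rw [hyt j x t ht] at h
    exact h
  have hFt : ∀ j x t, t ∈ I →
      HasDerivAt (fun t' => f j x t') (Tfq n lam alp y f j x t) t := by
    intro j x t ht
    have h := sect_t_diff hIo (hfsmooth j) ht x
    rw [hft j x t ht] at h
    exact h
  -- the transformed constraint
  have hUt : ∀ x t, t ≠ 0 →
      ucon n ny x t = 2*(f k x t * f k x t) + 2*lam k - ucon n y x t := by
    intro x t ht
    have h1 : (∑ j, ny j x t)
        = ny k x t + ∑ j ∈ Finset.univ.erase k, ny j x t :=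
      (Finset.add_sum_erase _ _ (Finset.mem_univ k)).symm
    have h2 : (∑ j, y j x t)
        = y k x t + ∑ j ∈ Finset.univ.erase k, y j x t :=
      (Finset.add_sum_erase _ _ (Finset.mem_univ k)).symm
    simp only [ucon]
    rw [h1, h2, hnyk x t, Finset.sum_add_distrib]
    field_simp
    ring
  -- x-derivatives of the transformed quantities
  have hnfx : ∀ j, j ≠ k → ∀ x t, t ∈ I →
      HasDerivAt (fun x' => nf j x' t)
        (-(Fq n lam alp y f k x t) -
          (0*(f j x t - f k x t) -
            (lam j - lam k)*(Fq n lam alp y f j x t - Fq n lam alp y f k x t))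
            /(f j x t - f k x t)^2) x := by
    intro j hj x t ht
    have hdiv := (hasDerivAt_const x (lam j - lam k)).div
      ((hFx j x t ht).sub (hFx k x t ht)) (hfkne j hj x t ht)
    exact hasDerivAt_congr_fun ((hFx k x t ht).neg.sub hdiv) (fun z => hnf j hj z t)
  have hnyx : ∀ j, j ≠ k → ∀ x t, t ∈ I →
      HasDerivAt (fun x' => ny j x' t) (NYx n lam alp y f k j x t) x := by
    intro j hj x t ht
    have hgx := (hFx j x t ht).sub (hFx k x t ht)
    exact hasDerivAt_congr_fun
      ((hgx.div_const (lam j - lam k)).mul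
        ((hgx.mul (hYx j x t ht)).sub_const (alp j)))
      (fun z => hny j hj z t)
  -- the (yfx) system, f-part
  have G1f : ∀ j x t, t ∈ I →
      pdx (nf j) x t = ucon n ny x t - (nf j x t)^2 - lam j := by
    intro j x t ht
    by_cases hj : j = k
    · subst hj
      have h : HasDerivAt (fun x' => nf j x' t) (-(Fq n lam alp y f j x t)) x :=
        hasDerivAt_congr_fun (hFx j x t ht).neg (fun z => hnfk z t)
      have e1 : pdx (nf j) x t = _ := h.deriv
      rw [e1, hUt x t (htne ht), hnfk x t]
      simp only [Fq]
      ring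
    · have e1 : pdx (nf j) x t = _ := (hnfx j hj x t ht).deriv
      rw [e1, hUt x t (htne ht), hnf j hj x t]
      have hg := hfkne j hj x t ht
      have hm := hmu j hj
      simp only [Fq]
      field_simp
      ring
  -- the (yfx) system, y-part
  have G1y : ∀ j x t, t ∈ I →
      pdx (ny j) x t = 2 * ny j x t * nf j x t - nalp j := by
    intro j x t ht
    by_cases hj : j = k
    · subst hj
      have hsq : HasDerivAt (fun x' => f j x' t ^ 2)
          (Fq n lam alp y f j x t * f j x t + f j x t * Fq n lam alp y f j x t) x :=
        hasDerivAt_congr_fun ((hFx j x t ht).mul (hFx j x t ht))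
          (fun z => pow_two (f j z t))
      have hsum : HasDerivAt
          (fun x' => ∑ i ∈ Finset.univ.erase j, (ny i x' t + y i x' t))
          (∑ i ∈ Finset.univ.erase j,
            (NYx n lam alp y f j i x t + Yq n lam alp y f i x t)) x :=
        HasDerivAt.fun_sum (fun i him =>
          (hnyx i (Finset.ne_of_mem_erase him) x t ht).add (hYx i x t ht))
      have h : HasDerivAt (fun x' => ny j x' t) _ x :=
        hasDerivAt_congr_fun
          ((((hYx j x t ht).neg.add
            ((hsq.add_const (lam j)).const_mul (6*t))).sub
              (hasDerivAt_id x)).sub hsum)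
          (fun z => hnyk z t)
      have e1 : pdx (ny j) x t = _ := h.deriv
      rw [e1, hnfk x t, hnalpk]
      have hS : (∑ i ∈ Finset.univ.erase j,
            (NYx n lam alp y f j i x t + Yq n lam alp y f i x t))
          = ∑ i ∈ Finset.univ.erase j, 2*f j x t*(y i x t - ny i x t) :=
        Finset.sum_congr rfl (fun i him => by
          have hi := Finset.ne_of_mem_erase him
          rw [hny i hi x t]
          have hg := hfkne i hi x t ht
          have hm := hmu i hi
          simp only [NYx, Yq, Fq]
          field_simp
          ring)
      rw [hS, ← Finset.mul_sum, Finset.sum_sub_distrib, hnyk x t,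
        Finset.sum_add_distrib]
      have hSy : (∑ i, y i x t)
          = y j x t + ∑ i ∈ Finset.univ.erase j, y i x t :=
        (Finset.add_sum_erase _ _ (Finset.mem_univ j)).symm
      simp only [Yq, Fq, ucon]
      rw [hSy]
      have htz := htne ht
      field_simp
      ring
    · have e1 : pdx (ny j) x t = _ := (hnyx j hj x t ht).deriv
      rw [e1, hny j hj x t, hnf j hj x t, hnalp j hj]
      have hg := hfkne j hj x t ht
      have hm := hmu j hj
      simp only [NYx, Yq, Fq]
      field_simp
      ring
  -- derivative of the x-section of the transformed constraint function
  have hUtx : ∀ x t, t ∈ I →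
      HasDerivAt (fun x' => ucon n ny x' t)
        (2*(Fq n lam alp y f k x t*f k x t + f k x t*Fq n lam alp y f k x t)
          - U1 n lam alp y f x t) x := by
    intro x t ht
    have h := ((((hFx k x t ht).mul (hFx k x t ht)).const_mul 2).add_const
      (2*lam k)).sub (hUx x t ht)
    exact hasDerivAt_congr_fun h (fun z => hUt z t (htne ht))
  have hpdxut : ∀ x t, t ∈ I →
      pdx (ucon n ny) x t
        = 2*(Fq n lam alp y f k x t*f k x t + f k x t*Fq n lam alp y f k x t)
          - U1 n lam alp y f x t :=
    fun x t ht => (hUtx x t ht).deriv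
  -- derivative of the x-section of `Fq k`
  have hFqs : ∀ x t, t ∈ I →
      HasDerivAt (fun x' => Fq n lam alp y f k x' t)
        (U1 n lam alp y f x t -
          (Fq n lam alp y f k x t*f k x t + f k x t*Fq n lam alp y f k x t)) x := by
    intro x t ht
    have hsq : HasDerivAt (fun x' => f k x' t ^ 2)
        (Fq n lam alp y f k x t * f k x t + f k x t * Fq n lam alp y f k x t) x :=
      hasDerivAt_congr_fun ((hFx k x t ht).mul (hFx k x t ht))
        (fun z => pow_two (f k z t))
    exact ((hUx x t ht).sub hsq).sub_const (lam k)
  -- derivative of the x-section of `pdx (ucon n ny)`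
  have hUTx : ∀ x t, t ∈ I →
      HasDerivAt (fun x' => pdx (ucon n ny) x' t)
        (2*((U1 n lam alp y f x t -
              (Fq n lam alp y f k x t*f k x t + f k x t*Fq n lam alp y f k x t))
                * f k x t
              + Fq n lam alp y f k x t * Fq n lam alp y f k x t
            + (Fq n lam alp y f k x t * Fq n lam alp y f k x t
              + f k x t * (U1 n lam alp y f x t -
                (Fq n lam alp y f k x t*f k x t + f k x t*Fq n lam alp y f k x t))))
          - U2 n lam alp y f x t) x := by
    intro x t ht
    have h := ((((hFqs x t ht).mul (hFx k x t ht)).add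
      ((hFx k x t ht).mul (hFqs x t ht))).const_mul 2).sub (hU1s x t ht)
    exact hasDerivAt_congr_fun h (fun z => hpdxut z t ht)
  -- t-derivatives of the transformed quantities (j ≠ k)
  have hnyt : ∀ j, j ≠ k → ∀ x t, t ∈ I →
      HasDerivAt (fun t' => ny j x t') (NYt n lam alp y f k j x t) t := by
    intro j hj x t ht
    have hgt := (hFt j x t ht).sub (hFt k x t ht)
    exact hasDerivAt_congr_fun
      ((hgt.div_const (lam j - lam k)).mul
        ((hgt.mul (hYt j x t ht)).sub_const (alp j)))
      (fun z => hny j hj x z)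
  -- the (yft) system, f-part
  have G2f : ∀ j x t, t ∈ I →
      pdt (nf j) x t
        = pdx (fun x' t' => pdx (ucon n ny) x' t'
            - 2*(ucon n ny x' t' + 2*lam j) * nf j x' t') x t := by
    intro j x t ht
    have htz := htne ht
    by_cases hj : j = k
    · subst hj
      have hLt : HasDerivAt (fun t' => nf j x t') (-(Tfq n lam alp y f j x t)) t :=
        hasDerivAt_congr_fun (hFt j x t ht).neg (fun z => hnfk x z)
      have e1 : pdt (nf j) x t = _ := hLt.deriv
      have hB := (((((hFx j x t ht).mul (hFx j x t ht)).const_mul 2).add_const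
        (2*lam j)).sub (hUx x t ht)).add_const (2*lam j)
      have hR := (hUTx x t ht).sub ((hB.const_mul 2).mul (hFx j x t ht).neg)
      have hR2 : HasDerivAt (fun x' => pdx (ucon n ny) x' t
          - 2*(ucon n ny x' t + 2*lam j)*nf j x' t) _ x :=
        hasDerivAt_congr_fun hR (fun z => by
          simp only [Pi.add_apply, Pi.sub_apply, Pi.mul_apply, Pi.neg_apply, Pi.div_apply]
          rw [hpdxut z t ht, hUt z t htz, hnfk z t])
      have e2 : pdx (fun x' t' => pdx (ucon n ny) x' t'
          - 2*(ucon n ny x' t' + 2*lam j) * nf j x' t') x t = _ := hR2.deriv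
      rw [e1, e2]
      simp only [Tfq, Tyq, U1, U2, Wq, Yq, Fq, Pi.add_apply, Pi.sub_apply, Pi.mul_apply, Pi.neg_apply, Pi.div_apply]
      field_simp
      ring
    · have hg := hfkne j hj x t ht
      have hm := hmu j hj
      have hgt := (hFt j x t ht).sub (hFt k x t ht)
      have hLt : HasDerivAt (fun t' => nf j x t') _ t :=
        hasDerivAt_congr_fun
          ((hFt k x t ht).neg.sub
            ((hasDerivAt_const t (lam j - lam k)).div hgt (hfkne j hj x t ht)))
          (fun z => hnf j hj x z)
      have e1 : pdt (nf j) x t = _ := hLt.deriv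
      have hB := (((((hFx k x t ht).mul (hFx k x t ht)).const_mul 2).add_const
        (2*lam k)).sub (hUx x t ht)).add_const (2*lam j)
      have hC := (hFx k x t ht).neg.sub
        ((hasDerivAt_const x (lam j - lam k)).div
          ((hFx j x t ht).sub (hFx k x t ht)) (hfkne j hj x t ht))
      have hR := (hUTx x t ht).sub ((hB.const_mul 2).mul hC)
      have hR2 : HasDerivAt (fun x' => pdx (ucon n ny) x' t
          - 2*(ucon n ny x' t + 2*lam j)*nf j x' t) _ x :=
        hasDerivAt_congr_fun hR (fun z => by
          simp only [Pi.add_apply, Pi.sub_apply, Pi.mul_apply, Pi.neg_apply, Pi.div_apply]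
          rw [hpdxut z t ht, hUt z t htz, hnf j hj z t])
      have e2 : pdx (fun x' t' => pdx (ucon n ny) x' t'
          - 2*(ucon n ny x' t' + 2*lam j) * nf j x' t') x t = _ := hR2.deriv
      rw [e1, e2]
      simp only [Tfq, Tyq, U1, U2, Wq, Yq, Fq, Pi.add_apply, Pi.sub_apply, Pi.mul_apply, Pi.neg_apply, Pi.div_apply]
      field_simp
      ring
  -- the (yft) system, y-part
  have G2y : ∀ j x t, t ∈ I →
      pdt (ny j) x t
        = 2 * pdx (ucon n ny) x t * ny j x t
          - 2 * (ucon n ny x t + 2*lam j) * pdx (ny j) x t := by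
    intro j x t ht
    have htz := htne ht
    by_cases hj : j = k
    · subst hj
      -- left-hand side derivative
      have hsqt : HasDerivAt (fun t' => f j x t' ^ 2)
          (Tfq n lam alp y f j x t * f j x t + f j x t * Tfq n lam alp y f j x t) t :=
        hasDerivAt_congr_fun ((hFt j x t ht).mul (hFt j x t ht))
          (fun z => pow_two (f j x z))
      have h6 := ((hasDerivAt_id t).const_mul 6).mul (hsqt.add_const (lam j))
      have hnytsum : HasDerivAt
          (fun t' => ∑ i ∈ Finset.univ.erase j, (ny i x t' + y i x t'))
          (∑ i ∈ Finset.univ.erase j,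
            (NYt n lam alp y f j i x t + Tyq n lam alp y f i x t)) t :=
        HasDerivAt.fun_sum (fun i him =>
          (hnyt i (Finset.ne_of_mem_erase him) x t ht).add (hYt i x t ht))
      have hLt : HasDerivAt (fun t' => ny j x t') _ t :=
        hasDerivAt_congr_fun
          ((((hYt j x t ht).neg.add h6).sub_const x).sub hnytsum)
          (fun z => hnyk x z)
      have e1 : pdt (ny j) x t = _ := hLt.deriv
      rw [e1, hpdxut x t ht, hUt x t htz, G1y j x t ht, hnfk x t, hnalpk]
      -- sum of per-index brackets
      have hBsum : (∑ i ∈ Finset.univ.erase j,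
            (NYt n lam alp y f j i x t + Tyq n lam alp y f i x t))
          = (2*(2*(Fq n lam alp y f j x t*f j x t + f j x t*Fq n lam alp y f j x t)
                - U1 n lam alp y f x t)
              + 4*f j x t*((2*(f j x t*f j x t) + 2*lam j - ucon n y x t) + 2*lam j))
              * (∑ i ∈ Finset.univ.erase j, ny i x t)
            + (2*U1 n lam alp y f x t
                - 4*f j x t*((2*(f j x t*f j x t) + 2*lam j - ucon n y x t) + 2*lam j)
                - 8*f j x t*(ucon n y x t - lam j - f j x t*f j x t))
              * (∑ i ∈ Finset.univ.erase j, y i x t)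
            + (2*((2*(f j x t*f j x t) + 2*lam j - ucon n y x t) - ucon n y x t)
                - 8*(f j x t*f j x t))
              * (∑ i ∈ Finset.univ.erase j, Yq n lam alp y f i x t)
            + (4*f j x t) * (∑ i ∈ Finset.univ.erase j, Wq n lam alp y f i x t) := by
        have hper : ∀ i ∈ Finset.univ.erase j,
            NYt n lam alp y f j i x t + Tyq n lam alp y f i x t
            = (2*(2*(Fq n lam alp y f j x t*f j x t + f j x t*Fq n lam alp y f j x t)
                  - U1 n lam alp y f x t)
                + 4*f j x t*((2*(f j x t*f j x t) + 2*lam j - ucon n y x t) + 2*lam j))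
                * ny i x t
              + (2*U1 n lam alp y f x t
                  - 4*f j x t*((2*(f j x t*f j x t) + 2*lam j - ucon n y x t) + 2*lam j)
                  - 8*f j x t*(ucon n y x t - lam j - f j x t*f j x t))
                * y i x t
              + (2*((2*(f j x t*f j x t) + 2*lam j - ucon n y x t) - ucon n y x t)
                  - 8*(f j x t*f j x t))
                * Yq n lam alp y f i x t
              + (4*f j x t) * Wq n lam alp y f i x t := by
          intro i him
          have hi := Finset.ne_of_mem_erase him
          have hgi := hfkne i hi x t ht
          have hmi := hmu i hi
          rw [hny i hi x t]
          simp only [NYt, Tfq, Tyq, U1, U2, Wq, Yq, Fq]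
          field_simp
          ring
        rw [Finset.sum_congr rfl hper, Finset.sum_add_distrib,
          Finset.sum_add_distrib, Finset.sum_add_distrib,
          ← Finset.mul_sum, ← Finset.mul_sum, ← Finset.mul_sum, ← Finset.mul_sum]
      rw [hBsum, hnyk x t, Finset.sum_add_distrib]
      -- split the full sums
      have hSy : (∑ i, y i x t)
          = y j x t + ∑ i ∈ Finset.univ.erase j, y i x t :=
        (Finset.add_sum_erase _ _ (Finset.mem_univ j)).symm
      have hSYq : (∑ i, Yq n lam alp y f i x t)
          = Yq n lam alp y f j x t + ∑ i ∈ Finset.univ.erase j, Yq n lam alp y f i x t :=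
        (Finset.add_sum_erase _ _ (Finset.mem_univ j)).symm
      have hSWq : (∑ i, Wq n lam alp y f i x t)
          = Wq n lam alp y f j x t + ∑ i ∈ Finset.univ.erase j, Wq n lam alp y f i x t :=
        (Finset.add_sum_erase _ _ (Finset.mem_univ j)).symm
      have hUsplit : ucon n y x t
          = x/(6*t) + (y j x t + ∑ i ∈ Finset.univ.erase j, y i x t)/(3*t) := by
        simp only [ucon]; rw [hSy]
      simp only [Tyq, Tfq, U1, U2]
      rw [hSYq, hSWq]
      simp only [Wq, Yq, Fq, id_eq]
      simp only [hUsplit]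
      field_simp
      ring
    · have hg := hfkne j hj x t ht
      have hm := hmu j hj
      have e1 : pdt (ny j) x t = _ := (hnyt j hj x t ht).deriv
      rw [e1, hpdxut x t ht, hUt x t htz, G1y j x t ht, hny j hj x t,
        hnf j hj x t, hnalp j hj]
      simp only [NYt, Tfq, Tyq, U1, U2, Wq, Yq, Fq]
      field_simp
      ring
  exact ⟨fun j x t ht => ⟨G1y j x t ht, G1f j x t ht⟩,
    fun j x t ht => ⟨G2y j x t ht, G2f j x t ht⟩⟩
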